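/- arXiv:0809.1722 — 2 statements merged into one kernel-verified Lean document; each statement's English description precedes it below -/
import Mathlib

section
/- Let μ > 0, g(X) = -X^3 + 3μ^2 X, and fix b₁ with 0 ≤ b₁ < 1/μ². As b₂ increases to 2μ - 2 b₁ μ^3 from below (staying in the region where X + b₁ g(X) + b₂ < 0 on (-2μ, -μ]), the integral T₋⁰(b₁,b₂) = ∫_{-2μ}^{-μ} g'(X)/(X + b₁ g(X) + b₂) dX tends to +∞, while T₊⁰(b₁,b₂) = ∫_{2μ}^{μ} g'(X)/(X + b₁ g(X) + b₂) dX remains bounded. -/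
open Filter

set_option maxHeartbeats 1000000 in
theorem Tminus_blows_up_Tplus_bounded (μ b₁ : ℝ) (hμ : 0 < μ)
    (hb₁ : 0 ≤ b₁) (hb₁' : b₁ < 1/μ^2)
    (g : ℝ → ℝ) (hg : ∀ X, g X = -X^3 + 3*μ^2*X)
    (hneg : ∀ b₂ ∈ Set.Ico (0:ℝ) (2*μ - 2*b₁*μ^3), ∀ X ∈ Set.Ioc (-2*μ) (-μ),
      X + b₁ * g X + b₂ < 0) :
    Tendsto (fun b₂ => ∫ X in (-2*μ)..(-μ), deriv g X / (X + b₁ * g X + b₂))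
      (nhdsWithin (2*μ - 2*b₁*μ^3) (Set.Ico 0 (2*μ - 2*b₁*μ^3))) atTop ∧
    ∃ M : ℝ, ∀ b₂ ∈ Set.Ico (0:ℝ) (2*μ - 2*b₁*μ^3),
      |∫ X in (2*μ)..μ, deriv g X / (X + b₁ * g X + b₂)| ≤ M := by
  have hgfun : g = fun X => -X^3 + 3*μ^2*X := funext hg
  have hμ2 : b₁ * μ ^ 2 < 1 := (lt_div_iff₀ (pow_pos hμ 2)).mp hb₁'
  set B := 2*μ - 2*b₁*μ^3 with hBdef
  clear_value B
  have hB : 0 < B := by rw [hBdef]; nlinarith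
  have hdg : ∀ x, deriv g x = 3*μ^2 - 3*x^2 := by
    intro x
    have h1 : HasDerivAt g (3*μ^2 - 3*x^2) x := by
      rw [hgfun]
      have h3 : HasDerivAt (fun X : ℝ => X^3) (3*x^2) x := by
        simpa using hasDerivAt_pow 3 x
      have h4 : HasDerivAt (fun X : ℝ => 3*μ^2*X) (3*μ^2) x := by
        simpa using (hasDerivAt_id x).const_mul (3*μ^2)
      have := h3.neg.add h4
      convert this using 1
      all_goals first | rfl | ring
    exact h1.deriv
  have hgc : Continuous g := by rw [hgfun]; continuity
  have hdenc : ∀ b₂ : ℝ, Continuous fun X => X + b₁ * g X + b₂ := fun b₂ =>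
    (continuous_id.add (continuous_const.mul hgc)).add continuous_const
  have hnumc : Continuous fun X : ℝ => 3*μ^2 - 3*X^2 := by continuity
  have hden : ∀ b₂ ∈ Set.Ico (0:ℝ) B, ∀ X ∈ Set.Icc (-2*μ) (-μ),
      X + b₁ * g X + b₂ < 0 := by
    intro b₂ hb₂ X hX
    rcases eq_or_lt_of_le hX.1 with h | h
    · rw [← h, hg]
      have h2 := hb₂.2
      rw [hBdef] at h2
      nlinarith
    · exact hneg b₂ hb₂ X ⟨h, hX.2⟩
  simp only [hdg]
  constructor
  · -- the blow-up part
    have key : ∀ b₂ ∈ Set.Ico (0:ℝ) B,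
        3*μ^2/8 * Real.log ((5*μ + (B - b₂))/(B - b₂)) ≤
          ∫ X in (-2*μ)..(-μ), (3*μ^2 - 3*X^2) / (X + b₁ * g X + b₂) := by
      intro b₂ hb₂
      set ε := B - b₂ with hε
      clear_value ε
      have hεpos : 0 < ε := by rw [hε]; exact sub_pos.mpr hb₂.2
      have hint : ∀ a c : ℝ, -2*μ ≤ a → a ≤ c → c ≤ -μ →
          IntervalIntegrable (fun X => (3*μ^2-3*X^2)/(X + b₁*g X + b₂))
            MeasureTheory.volume a c := by
        intro a c h1 h2 h3
        apply ContinuousOn.intervalIntegrable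
        apply ContinuousOn.div hnumc.continuousOn (hdenc b₂).continuousOn
        intro x hx
        rw [Set.uIcc_of_le h2] at hx
        exact (hden b₂ hb₂ x ⟨le_trans h1 hx.1, le_trans hx.2 h3⟩).ne
      have hm32 : -2*μ ≤ -3*μ/2 := by linarith
      have hm1 : -3*μ/2 ≤ -μ := by linarith
      -- comparison function integrability
      have hFc : ContinuousOn (fun X : ℝ => (15*μ^2/4) / (10*(X+2*μ) + ε))
          (Set.uIcc (-2*μ) (-3*μ/2)) := by
        apply ContinuousOn.div continuousOn_const
        · exact ((continuous_const.mul (continuous_id.add continuous_const)).add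
            continuous_const).continuousOn
        · intro x hx
          rw [Set.uIcc_of_le hm32] at hx
          have h0 : 0 < 10*(x+2*μ) + ε := by
            have := hx.1
            linarith
          exact h0.ne'
      have hFint : IntervalIntegrable (fun X : ℝ => (15*μ^2/4) / (10*(X+2*μ) + ε))
          MeasureTheory.volume (-2*μ) (-3*μ/2) := hFc.intervalIntegrable
      -- split the integral
      have hsplit : (∫ X in (-2*μ)..(-3*μ/2), (3*μ^2-3*X^2)/(X + b₁*g X + b₂))
            + (∫ X in (-3*μ/2)..(-μ), (3*μ^2-3*X^2)/(X + b₁*g X + b₂))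
          = ∫ X in (-2*μ)..(-μ), (3*μ^2-3*X^2)/(X + b₁*g X + b₂) :=
        intervalIntegral.integral_add_adjacent_intervals
          (hint _ _ le_rfl hm32 hm1) (hint _ _ hm32 hm1 le_rfl)
      -- second piece nonnegative
      have hsecond : 0 ≤ ∫ X in (-3*μ/2)..(-μ), (3*μ^2-3*X^2)/(X + b₁*g X + b₂) := by
        apply intervalIntegral.integral_nonneg hm1
        intro x hx
        have hxm : x ∈ Set.Icc (-2*μ) (-μ) := ⟨le_trans hm32 hx.1, hx.2⟩
        have hd := hden b₂ hb₂ x hxm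
        have hn : 3*μ^2 - 3*x^2 ≤ 0 := by nlinarith [hxm.2, hμ]
        exact div_nonneg_iff.mpr (Or.inr ⟨hn, hd.le⟩)
      -- pointwise comparison on the first piece
      have hfirst : (∫ X in (-2*μ)..(-3*μ/2), (15*μ^2/4) / (10*(X+2*μ) + ε))
          ≤ ∫ X in (-2*μ)..(-3*μ/2), (3*μ^2-3*X^2)/(X + b₁*g X + b₂) := by
        apply intervalIntegral.integral_mono_on hm32 hFint
          (hint _ _ le_rfl hm32 hm1)
        intro X hX
        have hX1 : -2*μ ≤ X := hX.1
        have hX2 : X ≤ -3*μ/2 := hX.2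
        have hq : 0 < -(X + b₁ * g X + b₂) := by
          have := hden b₂ hb₂ X ⟨hX1, by linarith⟩
          linarith
        have hqD : -(X + b₁ * g X + b₂) ≤ 10*(X+2*μ) + ε := by
          rw [hg X, hε, hBdef]
          have h1 : (0:ℝ) ≤ X + 2*μ := by linarith
          have h2' : (X-μ)^2 ≤ 9*μ^2 := by
            nlinarith [mul_nonneg h1 (show (0:ℝ) ≤ 4*μ - X by linarith)]
          have h2 : b₁*(X-μ)^2 ≤ b₁*(9*μ^2) := mul_le_mul_of_nonneg_left h2' hb₁
          have h9 : b₁*(9*μ^2) < 9 := by nlinarith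
          have h3 : (0:ℝ) ≤ (X + 2*μ) * (11 - b₁*(X-μ)^2) :=
            mul_nonneg h1 (by linarith)
          linarith [h3, sq_nonneg (X-μ)]
        have hnum : 15*μ^2/4 ≤ -(3*μ^2 - 3*X^2) := by nlinarith [sq_nonneg (X + 3*μ/2)]
        calc (15*μ^2/4) / (10*(X+2*μ) + ε)
            ≤ (-(3*μ^2-3*X^2)) / (10*(X+2*μ)+ε) := by
              gcongr
              linarith
          _ ≤ (-(3*μ^2-3*X^2)) / (-(X + b₁ * g X + b₂)) := by
              gcongr
              linarith [hnum, sq_nonneg μ, hμ]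
          _ = (3*μ^2-3*X^2) / (X + b₁ * g X + b₂) := neg_div_neg_eq _ _
      -- compute the comparison integral via FTC
      have hFval : (∫ X in (-2*μ)..(-3*μ/2), (15*μ^2/4) / (10*(X+2*μ) + ε))
          = 3*μ^2/8 * Real.log ((5*μ+ε)/ε) := by
        have hFTC : ∀ x ∈ Set.uIcc (-2*μ) (-3*μ/2),
            HasDerivAt (fun X : ℝ => 3*μ^2/8 * Real.log (10*(X+2*μ)+ε))
              ((15*μ^2/4) / (10*(x+2*μ) + ε)) x := by
          intro x hx
          rw [Set.uIcc_of_le hm32] at hx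
          have h0 : 0 < 10*(x+2*μ) + ε := by linarith [hx.1]
          have hlin : HasDerivAt (fun X : ℝ => 10*(X+2*μ)+ε) 10 x := by
            have : HasDerivAt (fun X : ℝ => 10*X + (20*μ+ε)) 10 x := by
              simpa using ((hasDerivAt_id x).const_mul (10:ℝ)).add_const (20*μ+ε)
            convert this using 2
            ring
          have hlog := (hlin.log h0.ne')
          have := hlog.const_mul (3*μ^2/8)
          convert this using 1
          all_goals first | rfl | (field_simp; ring)
        rw [intervalIntegral.integral_eq_sub_of_hasDerivAt hFTC hFint]
        rw [show 10*(-3*μ/2+2*μ)+ε = 5*μ+ε by ring, show 10*(-2*μ+2*μ)+ε = ε by ring]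
        rw [Real.log_div (by positivity) hεpos.ne']
        ring
      linarith [hsplit, hsecond, hfirst, hFval.ge, hFval.le]
    -- now the limit argument
    have hLtend : Tendsto (fun e : ℝ => 3*μ^2/8 * Real.log ((5*μ+e)/e))
        (nhdsWithin 0 (Set.Ioi 0)) atTop := by
      have h1 : Tendsto (fun e : ℝ => Real.log (5*μ+e) + -Real.log e)
          (nhdsWithin 0 (Set.Ioi 0)) atTop := by
        have hA : Tendsto (fun e : ℝ => Real.log (5*μ+e))
            (nhdsWithin 0 (Set.Ioi 0)) (nhds (Real.log (5*μ+0))) := by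
          have hc : ContinuousAt (fun e : ℝ => Real.log (5*μ+e)) 0 :=
            ContinuousAt.comp (Real.continuousAt_log (by positivity))
              ((continuous_const.add continuous_id).continuousAt)
          exact hc.tendsto.mono_left nhdsWithin_le_nhds
        have hBt : Tendsto (fun e : ℝ => -Real.log e)
            (nhdsWithin 0 (Set.Ioi 0)) atTop :=
          tendsto_neg_atBot_atTop.comp Real.tendsto_log_nhdsGT_zero
        exact hA.add_atTop hBt
      have h2 : Tendsto (fun e : ℝ => Real.log ((5*μ+e)/e))
          (nhdsWithin 0 (Set.Ioi 0)) atTop := by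
        apply h1.congr'
        filter_upwards [self_mem_nhdsWithin] with e he
        have he' : (0:ℝ) < e := he
        rw [Real.log_div (by linarith) (ne_of_gt he')]
        ring
      exact h2.const_mul_atTop (by positivity)
    have hmap : Tendsto (fun b₂ => B - b₂) (nhdsWithin B (Set.Ico 0 B))
        (nhdsWithin 0 (Set.Ioi 0)) := by
      apply tendsto_nhdsWithin_of_tendsto_nhds_of_eventually_within
      · have h : Tendsto (fun b₂ : ℝ => B - b₂) (nhds B) (nhds (B - B)) :=
          (continuous_const.sub continuous_id).tendsto B
        rw [sub_self] at h
        exact h.mono_left nhdsWithin_le_nhds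
      · filter_upwards [self_mem_nhdsWithin] with b₂ hb₂
        exact Set.mem_Ioi.mpr (sub_pos.mpr hb₂.2)
    apply tendsto_atTop_mono' _ _ (hLtend.comp hmap)
    filter_upwards [self_mem_nhdsWithin] with b₂ hb₂
    exact key b₂ hb₂
  · -- the bounded part
    refine ⟨9*μ^2/(μ*(1-b₁*μ^2)) * μ, ?_⟩
    intro b₂ hb₂
    have hdpos : 0 < μ*(1-b₁*μ^2) := by nlinarith
    have keyb : ∀ x ∈ Set.uIoc (2*μ) μ,
        ‖(3*μ^2-3*x^2) / (x + b₁ * g x + b₂)‖ ≤ 9*μ^2/(μ*(1-b₁*μ^2)) := by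
      intro x hx
      rw [Set.uIoc_of_ge (by linarith)] at hx
      have hx1 : μ < x := hx.1
      have hx2 : x ≤ 2*μ := hx.2
      have hdlb : μ*(1-b₁*μ^2) ≤ x + b₁ * g x + b₂ := by
        rw [hg x]
        have e2 : μ*(1-b₁*μ^2) ≤ x*(1-b₁*μ^2) :=
          mul_le_mul_of_nonneg_right hx1.le (by linarith)
        have e3 : 0 ≤ x * (b₁*(4*μ^2 - x^2)) :=
          mul_nonneg (by linarith) (mul_nonneg hb₁ (by nlinarith))
        nlinarith [e2, e3, hb₂.1]
      rw [Real.norm_eq_abs, abs_div]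
      apply div_le_div₀ (by positivity)
      · rw [abs_le]
        constructor <;> nlinarith
      · exact hdpos
      · rw [abs_of_pos (lt_of_lt_of_le hdpos hdlb)]
        exact hdlb
    calc |∫ X in (2*μ)..μ, (3*μ^2-3*X^2) / (X + b₁ * g X + b₂)|
        = ‖∫ X in (2*μ)..μ, (3*μ^2-3*X^2) / (X + b₁ * g X + b₂)‖ :=
          (Real.norm_eq_abs _).symm
      _ ≤ 9*μ^2/(μ*(1-b₁*μ^2)) * |μ - 2*μ| :=
          intervalIntegral.norm_integral_le_of_norm_le_const keyb
      _ = 9*μ^2/(μ*(1-b₁*μ^2)) * μ := by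
          rw [show μ - 2*μ = -μ by ring, abs_neg, abs_of_pos hμ]
end

section
/- Let μ > 0, g(X) = -X^3 + 3μ^2 X, and fix b₁ ∈ [0, 1/μ²) with b₁ ≠ 1/(9μ²). For every r ≥ 1 there exists a unique b₂ ∈ [0, 2μ - 2 b₁ μ^3) such that T₋⁰(b₁,b₂)/T₊⁰(b₁,b₂) = r, where T₋⁰ and T₊⁰ are as defined (and both positive on this range of b₂). -/
open Set intervalIntegral

namespace DurationRatio

noncomputable def hden (μ b₁ : ℝ) (X : ℝ) : ℝ := X + b₁ * (-X^3 + 3*μ^2*X)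

noncomputable def Fi (μ b₁ b₂ : ℝ) (X : ℝ) : ℝ := (-3*X^2 + 3*μ^2) / (hden μ b₁ X + b₂)

noncomputable def Tm (μ b₁ b₂ : ℝ) : ℝ := ∫ X in (-2*μ)..(-μ), Fi μ b₁ b₂ X
noncomputable def Tp (μ b₁ b₂ : ℝ) : ℝ := ∫ X in (2*μ)..μ, Fi μ b₁ b₂ X

variable {μ b₁ : ℝ}

lemma div_lt_div_aux {n d1 d2 : ℝ} (hn : n < 0) (h12 : d1 < d2) (hp : 0 < d1 * d2) :
    n / d1 < n / d2 := by
  have hd1 : d1 ≠ 0 := by rintro rfl; simp at hp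
  have hd2 : d2 ≠ 0 := by rintro rfl; simp at hp
  have e : n / d2 - n / d1 = (n * (d1 - d2)) / (d1 * d2) := by field_simp
  have : 0 < n / d2 - n / d1 := by rw [e]; exact div_pos (by nlinarith) hp
  linarith

lemma div_le_div_aux {n d1 d2 : ℝ} (hn : n ≤ 0) (h12 : d1 ≤ d2) (hp : 0 < d1 * d2) :
    n / d1 ≤ n / d2 := by
  have hd1 : d1 ≠ 0 := by rintro rfl; simp at hp
  have hd2 : d2 ≠ 0 := by rintro rfl; simp at hp
  have e : n / d2 - n / d1 = (n * (d1 - d2)) / (d1 * d2) := by field_simp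
  have : 0 ≤ n / d2 - n / d1 := by rw [e]; exact div_nonneg (by nlinarith) hp.le
  linarith

lemma contOn_m {b₂ : ℝ} (hn : ∀ X ∈ Icc (-2*μ) (-μ), hden μ b₁ X + b₂ < 0) :
    ContinuousOn (Fi μ b₁ b₂) (Icc (-2*μ) (-μ)) := by
  unfold Fi hden
  exact ContinuousOn.div (by fun_prop) (by fun_prop) (fun X hX => (hn X hX).ne)

lemma contOn_p {b₂ : ℝ} (hp : ∀ X ∈ Icc μ (2*μ), 0 < hden μ b₁ X + b₂) :
    ContinuousOn (Fi μ b₁ b₂) (Icc μ (2*μ)) := by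
  unfold Fi hden
  exact ContinuousOn.div (by fun_prop) (by fun_prop) (fun X hX => (hp X hX).ne')

lemma intInt_m {b₂ : ℝ} (hμ : 0 < μ) (hn : ∀ X ∈ Icc (-2*μ) (-μ), hden μ b₁ X + b₂ < 0) :
    IntervalIntegrable (Fi μ b₁ b₂) MeasureTheory.volume (-2*μ) (-μ) := by
  apply ContinuousOn.intervalIntegrable
  rw [uIcc_of_le (by linarith)]
  exact contOn_m hn

lemma intInt_p {b₂ : ℝ} (hμ : 0 < μ) (hp : ∀ X ∈ Icc μ (2*μ), 0 < hden μ b₁ X + b₂) :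
    IntervalIntegrable (Fi μ b₁ b₂) MeasureTheory.volume μ (2*μ) := by
  apply ContinuousOn.intervalIntegrable
  rw [uIcc_of_le (by linarith)]
  exact contOn_p hp

lemma num_neg (hμ : 0 < μ) {X : ℝ} (hX : X < -μ ∨ μ < X) : -3*X^2 + 3*μ^2 < 0 := by
  rcases hX with h | h
  · nlinarith [mul_pos (show (0:ℝ) < μ - X by linarith) (show (0:ℝ) < -(μ + X) by linarith)]
  · nlinarith [mul_pos (show (0:ℝ) < X - μ by linarith) (show (0:ℝ) < X + μ by linarith)]

lemma num_nonpos (hμ : 0 < μ) {X : ℝ} (hX : X ≤ -μ ∨ μ ≤ X) : -3*X^2 + 3*μ^2 ≤ 0 := by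
  rcases hX with h | h
  · nlinarith [mul_nonneg (show (0:ℝ) ≤ μ - X by linarith) (show (0:ℝ) ≤ -(μ + X) by linarith)]
  · nlinarith [mul_nonneg (show (0:ℝ) ≤ X - μ by linarith) (show (0:ℝ) ≤ X + μ by linarith)]

lemma Tm_pos {b₂ : ℝ} (hμ : 0 < μ) (hn : ∀ X ∈ Icc (-2*μ) (-μ), hden μ b₁ X + b₂ < 0) :
    0 < Tm μ b₁ b₂ := by
  refine intervalIntegral_pos_of_pos_on (intInt_m hμ hn) (fun X hX => ?_) (by linarith)
  exact div_pos_of_neg_of_neg (num_neg hμ (Or.inl hX.2)) (hn X (Ioo_subset_Icc_self hX))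

lemma Tp_pos {b₂ : ℝ} (hμ : 0 < μ) (hp : ∀ X ∈ Icc μ (2*μ), 0 < hden μ b₁ X + b₂) :
    0 < Tp μ b₁ b₂ := by
  have h1 : 0 < ∫ X in μ..(2*μ), -Fi μ b₁ b₂ X := by
    refine intervalIntegral_pos_of_pos_on ((intInt_p hμ hp).neg) (fun X hX => ?_) (by linarith)
    have := hp X (Ioo_subset_Icc_self hX)
    have hnum := num_neg hμ (Or.inr (show μ < X from hX.1))
    unfold Fi
    rw [neg_div']
    exact div_pos (by linarith) this
  unfold Tp
  rw [integral_symm]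
  rw [integral_neg] at h1
  linarith

lemma Tm_strictMono (hμ : 0 < μ) {a b : ℝ}
    (ha : ∀ X ∈ Icc (-2*μ) (-μ), hden μ b₁ X + a < 0)
    (hb : ∀ X ∈ Icc (-2*μ) (-μ), hden μ b₁ X + b < 0)
    (hab : a < b) : Tm μ b₁ a < Tm μ b₁ b := by
  refine integral_lt_integral_of_continuousOn_of_le_of_exists_lt (by linarith)
    (contOn_m ha) (contOn_m hb) (fun X hX => ?_) ?_
  · have hX' : X ∈ Icc (-2*μ) (-μ) := Ioc_subset_Icc_self hX
    exact div_le_div_aux (num_nonpos hμ (Or.inl hX'.2)) (by linarith)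
      (mul_pos_of_neg_of_neg (ha X hX') (hb X hX'))
  · refine ⟨-(3*μ/2), ⟨by linarith, by linarith⟩, ?_⟩
    have hX' : -(3*μ/2) ∈ Icc (-2*μ) (-μ) := ⟨by linarith, by linarith⟩
    exact div_lt_div_aux (num_neg hμ (Or.inl (by linarith))) (by linarith)
      (mul_pos_of_neg_of_neg (ha _ hX') (hb _ hX'))

lemma Tp_strictAnti (hμ : 0 < μ) {a b : ℝ}
    (ha : ∀ X ∈ Icc μ (2*μ), 0 < hden μ b₁ X + a)
    (hb : ∀ X ∈ Icc μ (2*μ), 0 < hden μ b₁ X + b)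
    (hab : a < b) : Tp μ b₁ b < Tp μ b₁ a := by
  have key : (∫ X in μ..(2*μ), Fi μ b₁ a X) < ∫ X in μ..(2*μ), Fi μ b₁ b X := by
    refine integral_lt_integral_of_continuousOn_of_le_of_exists_lt (by linarith)
      (contOn_p ha) (contOn_p hb) (fun X hX => ?_) ?_
    · have hX' : X ∈ Icc μ (2*μ) := Ioc_subset_Icc_self hX
      exact div_le_div_aux (num_nonpos hμ (Or.inr hX'.1)) (by linarith)
        (mul_pos (ha X hX') (hb X hX'))
    · refine ⟨3*μ/2, ⟨by linarith, by linarith⟩, ?_⟩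
      have hX' : 3*μ/2 ∈ Icc μ (2*μ) := ⟨by linarith, by linarith⟩
      exact div_lt_div_aux (num_neg hμ (Or.inr (by linarith))) (by linarith)
        (mul_pos (ha _ hX') (hb _ hX'))
  unfold Tp
  rw [integral_symm, integral_symm μ (2*μ)]
  linarith

lemma Tm_zero_eq_Tp_zero : Tm μ b₁ 0 = Tp μ b₁ 0 := by
  unfold Tm Tp
  have h : ∀ X : ℝ, Fi μ b₁ 0 X = -(Fi μ b₁ 0 (-X)) := by
    intro X
    unfold Fi hden
    rw [show -X + b₁ * (-(-X)^3 + 3*μ^2*(-X)) + 0 = -(X + b₁ * (-X^3 + 3*μ^2*X) + 0) from by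
      ring, show -3*(-X)^2 + 3*μ^2 = -3*X^2 + 3*μ^2 from by ring, div_neg, neg_neg]
  have h2 : (∫ X in (-2*μ)..(-μ), Fi μ b₁ 0 X)
      = ∫ X in (-2*μ)..(-μ), -(Fi μ b₁ 0 (-X)) := integral_congr (fun X _ => h X)
  rw [h2, integral_neg, integral_comp_neg, neg_neg, show -(-2*μ) = 2*μ from by ring,
    integral_symm, neg_neg]

lemma contOn_Tm (hμ : 0 < μ) {c : ℝ}
    (hc : ∀ X ∈ Icc (-2*μ) (-μ), hden μ b₁ X + c < 0) :
    ContinuousOn (fun b₂ => Tm μ b₁ b₂) (Icc 0 c) := by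
  obtain ⟨X₀, hX₀, hmax⟩ := isCompact_Icc.exists_isMaxOn
    (nonempty_Icc.mpr (by linarith : -2*μ ≤ -μ))
    ((by unfold hden; fun_prop : Continuous fun X => hden μ b₁ X + c).continuousOn)
  set δ := -(hden μ b₁ X₀ + c) with hδdef
  have hδpos : 0 < δ := by have := hc X₀ hX₀; simp only [hδdef]; linarith
  have hbound : ∀ X ∈ Icc (-2*μ) (-μ), hden μ b₁ X + c ≤ -δ := fun X hX => by
    have : hden μ b₁ X + c ≤ hden μ b₁ X₀ + c := hmax hX; simp only [hδdef]; linarith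
  have hGcont : Continuous (Function.uncurry
      (fun b₂ X => (-3*X^2 + 3*μ^2) / min (hden μ b₁ X + min b₂ c) (-δ) : ℝ → ℝ → ℝ)) := by
    apply Continuous.div
    · fun_prop
    · unfold hden; fun_prop
    · intro p
      exact ne_of_lt (lt_of_le_of_lt (min_le_right _ _) (by linarith))
  have hContInt : Continuous (fun b₂ =>
      ∫ X in (-2*μ)..(-μ), (-3*X^2 + 3*μ^2) / min (hden μ b₁ X + min b₂ c) (-δ)) :=
    continuous_parametric_intervalIntegral_of_continuous' hGcont _ _
  refine hContInt.continuousOn.congr (fun b₂ hb₂ => ?_)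
  unfold Tm
  refine integral_congr (fun X hX => ?_)
  rw [uIcc_of_le (by linarith : -2*μ ≤ -μ)] at hX
  have h1 : min b₂ c = b₂ := min_eq_left hb₂.2
  have h2 : hden μ b₁ X + b₂ ≤ -δ := le_trans
    (by linarith [hb₂.2] : hden μ b₁ X + b₂ ≤ hden μ b₁ X + c) (hbound X hX)
  unfold Fi
  rw [h1, min_eq_left h2]

lemma contOn_Tp (hμ : 0 < μ) {c : ℝ}
    (h0 : ∀ X ∈ Icc μ (2*μ), 0 < hden μ b₁ X + 0) :
    ContinuousOn (fun b₂ => Tp μ b₁ b₂) (Icc 0 c) := by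
  obtain ⟨X₀, hX₀, hmin⟩ := isCompact_Icc.exists_isMinOn
    (nonempty_Icc.mpr (by linarith : μ ≤ 2*μ))
    ((by unfold hden; fun_prop : Continuous fun X => hden μ b₁ X).continuousOn)
  set δ := hden μ b₁ X₀ with hδdef
  have hδpos : 0 < δ := by have := h0 X₀ hX₀; simp only [hδdef]; linarith
  have hbound : ∀ X ∈ Icc μ (2*μ), δ ≤ hden μ b₁ X := fun X hX => hmin hX
  have hGcont : Continuous (Function.uncurry
      (fun b₂ X => (-3*X^2 + 3*μ^2) / max (hden μ b₁ X + max b₂ 0) δ : ℝ → ℝ → ℝ)) := by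
    apply Continuous.div
    · fun_prop
    · unfold hden; fun_prop
    · intro p
      exact ne_of_gt (lt_of_lt_of_le hδpos (le_max_right _ _))
  have hContInt : Continuous (fun b₂ =>
      ∫ X in (2*μ)..μ, (-3*X^2 + 3*μ^2) / max (hden μ b₁ X + max b₂ 0) δ) :=
    continuous_parametric_intervalIntegral_of_continuous' hGcont _ _
  refine hContInt.continuousOn.congr (fun b₂ hb₂ => ?_)
  unfold Tp
  refine integral_congr (fun X hX => ?_)
  rw [uIcc_comm, uIcc_of_le (by linarith : μ ≤ 2*μ)] at hX
  have h1 : max b₂ 0 = b₂ := max_eq_left hb₂.1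
  have h2 : δ ≤ hden μ b₁ X + b₂ := le_trans (hbound X hX) (by linarith [hb₂.1])
  unfold Fi
  rw [h1, max_eq_left h2]

lemma Tm_large (hμ : 0 < μ) (hb₁0 : 0 ≤ b₁) (hb₁μ : b₁ * μ^2 ≤ 1)
    (hs : 0 < 2*μ - 2*b₁*μ^3)
    (hn : ∀ b₂ ∈ Ico (0:ℝ) (2*μ - 2*b₁*μ^3), ∀ X ∈ Icc (-2*μ) (-μ), hden μ b₁ X + b₂ < 0)
    (M : ℝ) : ∃ b₂ ∈ Ico (0:ℝ) (2*μ - 2*b₁*μ^3), M < Tm μ b₁ b₂ := by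
  set s : ℝ := 2*μ - 2*b₁*μ^3 with hsdef
  set ε : ℝ := min (s/2) (8*μ * Real.exp (-(16/(3*μ^2))*M - 1)) with hεdef
  have hεpos : 0 < ε := lt_min (by linarith) (by positivity)
  have hεs : ε ≤ s/2 := min_le_left _ _
  set b₂ : ℝ := s - ε with hb₂def
  have hmem : b₂ ∈ Ico (0:ℝ) s :=
    ⟨by simp only [hb₂def]; linarith, by simp only [hb₂def]; linarith⟩
  have hnb := hn b₂ hmem
  refine ⟨b₂, hmem, ?_⟩
  have h32 : (-2*μ) < -(3*μ/2) := by linarith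
  have h32' : -(3*μ/2) < -μ := by linarith
  have hsub : Icc (-2*μ) (-(3*μ/2)) ⊆ Icc (-2*μ) (-μ) := Icc_subset_Icc le_rfl (by linarith)
  have hsub2 : Icc (-(3*μ/2)) (-μ) ⊆ Icc (-2*μ) (-μ) := Icc_subset_Icc (by linarith) le_rfl
  have hptw : ∀ X ∈ Icc (-2*μ) (-(3*μ/2)),
      3*μ^2 / (ε + 16*(X + 2*μ)) ≤ Fi μ b₁ b₂ X := by
    intro X hX
    have hXI : X ∈ Icc (-2*μ) (-μ) := hsub hX
    have hdneg := hnb X hXI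
    have hX1 : -2*μ ≤ X := hX.1
    have hX2 : X ≤ -(3*μ/2) := hX.2
    have hq : 0 < -(hden μ b₁ X + b₂) := by linarith
    have h17 : b₁*(X-μ)^2 ≤ 17 := by
      nlinarith [mul_nonneg (show (0:ℝ) ≤ X + 2*μ by linarith)
          (show (0:ℝ) ≤ 4*μ - X by linarith),
        mul_le_mul_of_nonneg_left (show (X-μ)^2 ≤ 9*μ^2 by
          nlinarith [mul_nonneg (show (0:ℝ) ≤ X + 2*μ by linarith)
            (show (0:ℝ) ≤ 4*μ - X by linarith)]) hb₁0]
    have hub : -(hden μ b₁ X + b₂) ≤ ε + 16*(X + 2*μ) := by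
      simp only [hden, hb₂def, hsdef]
      nlinarith [mul_nonneg (show (0:ℝ) ≤ X + 2*μ by linarith)
        (show (0:ℝ) ≤ 17 - b₁*(X-μ)^2 by linarith)]
    have hnum : 3*μ^2 ≤ -(-3*X^2 + 3*μ^2) := by
      nlinarith [mul_nonneg (show (0:ℝ) ≤ 3*μ/2 - X by linarith)
        (show (0:ℝ) ≤ -(X + 3*μ/2) by linarith)]
    have hcal : 3*μ^2 / (ε + 16*(X + 2*μ)) ≤ (-(-3*X^2 + 3*μ^2)) / (-(hden μ b₁ X + b₂)) :=
      div_le_div₀ (le_trans (by positivity) hnum) hnum hq hub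
    rwa [neg_div_neg_eq] at hcal
  have hint1 : IntervalIntegrable (Fi μ b₁ b₂) MeasureTheory.volume (-2*μ) (-(3*μ/2)) :=
    (intInt_m hμ hnb).mono_set (by
      rw [uIcc_of_le (by linarith), uIcc_of_le (by linarith)]; exact hsub)
  have hint2 : IntervalIntegrable (Fi μ b₁ b₂) MeasureTheory.volume (-(3*μ/2)) (-μ) :=
    (intInt_m hμ hnb).mono_set (by
      rw [uIcc_of_le (by linarith), uIcc_of_le (by linarith)]; exact hsub2)
  have hlowcont : ContinuousOn (fun X => 3*μ^2 / (ε + 16*(X + 2*μ)))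
      (Icc (-2*μ) (-(3*μ/2))) := by
    apply ContinuousOn.div (by fun_prop) (by fun_prop)
    intro X hX
    have := hX.1
    have : (0:ℝ) < ε + 16*(X + 2*μ) := by nlinarith
    linarith
  have hlowint : IntervalIntegrable (fun X => 3*μ^2 / (ε + 16*(X + 2*μ)))
      MeasureTheory.volume (-2*μ) (-(3*μ/2)) := by
    apply ContinuousOn.intervalIntegrable
    rwa [uIcc_of_le (by linarith)]
  have hsplit : (∫ X in (-2*μ)..(-(3*μ/2)), Fi μ b₁ b₂ X)
      + (∫ X in (-(3*μ/2))..(-μ), Fi μ b₁ b₂ X) = Tm μ b₁ b₂ :=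
    integral_add_adjacent_intervals hint1 hint2
  have hsecond : 0 ≤ ∫ X in (-(3*μ/2))..(-μ), Fi μ b₁ b₂ X := by
    apply integral_nonneg (by linarith)
    intro X hX
    have hXI := hsub2 hX
    have h1 := num_nonpos hμ (Or.inl hXI.2)
    have h2 := hnb X hXI
    have := div_nonneg (neg_nonneg.2 h1) (neg_nonneg.2 h2.le)
    rwa [neg_div_neg_eq] at this
  have hcmp : (∫ X in (-2*μ)..(-(3*μ/2)), 3*μ^2 / (ε + 16*(X + 2*μ)))
      ≤ ∫ X in (-2*μ)..(-(3*μ/2)), Fi μ b₁ b₂ X :=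
    integral_mono_on (by linarith) hlowint hint1 hptw
  have hval : (∫ X in (-2*μ)..(-(3*μ/2)), 3*μ^2 / (ε + 16*(X + 2*μ)))
      = 3*μ^2/16 * (Real.log (ε + 8*μ) - Real.log ε) := by
    have hder : ∀ X ∈ uIcc (-2*μ) (-(3*μ/2)),
        HasDerivAt (fun X => 3*μ^2/16 * Real.log (ε + 16*(X + 2*μ)))
          (3*μ^2 / (ε + 16*(X + 2*μ))) X := by
      intro X hX
      rw [uIcc_of_le (by linarith)] at hX
      have hu : (0:ℝ) < ε + 16*(X + 2*μ) := by nlinarith [hX.1]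
      have h1 : HasDerivAt (fun X : ℝ => ε + 16*(X + 2*μ)) 16 X := by
        simpa using (((hasDerivAt_id X).add_const (2*μ)).const_mul (16:ℝ)).const_add ε
      have h2 := (Real.hasDerivAt_log hu.ne').comp X h1
      have h3 := h2.const_mul (3*μ^2/16)
      convert h3 using 1
      all_goals first | rfl | field_simp
    rw [integral_eq_sub_of_hasDerivAt hder ?_]
    · rw [show ε + 16*(-(3*μ/2) + 2*μ) = ε + 8*μ by ring,
        show ε + 16*(-2*μ + 2*μ) = ε by ring]
      ring
    · apply ContinuousOn.intervalIntegrable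
      rw [uIcc_of_le (by linarith)]
      exact hlowcont
  have hlog1 : Real.log (8*μ) ≤ Real.log (ε + 8*μ) :=
    Real.log_le_log (by positivity) (by linarith)
  have hlog2 : Real.log ε ≤ Real.log (8*μ) + (-(16/(3*μ^2))*M - 1) := by
    have hle : ε ≤ 8*μ * Real.exp (-(16/(3*μ^2))*M - 1) := min_le_right _ _
    calc Real.log ε ≤ Real.log (8*μ * Real.exp (-(16/(3*μ^2))*M - 1)) :=
          Real.log_le_log hεpos hle
      _ = Real.log (8*μ) + (-(16/(3*μ^2))*M - 1) := by
          rw [Real.log_mul (by positivity) (Real.exp_ne_zero _), Real.log_exp]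
  have hdiff : (16/(3*μ^2))*M + 1 ≤ Real.log (ε + 8*μ) - Real.log ε := by linarith
  have hmul := mul_le_mul_of_nonneg_left hdiff (by positivity : (0:ℝ) ≤ 3*μ^2/16)
  have he : 3*μ^2/16 * ((16/(3*μ^2))*M + 1) = M + 3*μ^2/16 := by
    field_simp
  have hM : M < 3*μ^2/16 * (Real.log (ε + 8*μ) - Real.log ε) := by
    rw [he] at hmul
    have hq16 : (0:ℝ) < 3*μ^2/16 := by positivity
    linarith
  rw [hval] at hcmp
  linarith

end DurationRatio

theorem exists_unique_b2_for_duration_ratio (μ b₁ : ℝ) (hμ : 0 < μ)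
    (hb₁0 : 0 ≤ b₁) (hb₁1 : b₁ < 1/μ^2) (hb₁9 : b₁ ≠ 1/(9*μ^2))
    (g : ℝ → ℝ) (hg : ∀ X, g X = -X^3 + 3*μ^2*X)
    (hneg : ∀ b₂ ∈ Set.Ico (0:ℝ) (2*μ - 2*b₁*μ^3), ∀ X ∈ Set.Icc (-2*μ) (-μ),
      X + b₁ * g X + b₂ < 0)
    (hpos : ∀ b₂ ∈ Set.Ico (0:ℝ) (2*μ - 2*b₁*μ^3), ∀ X ∈ Set.Icc μ (2*μ),
      0 < X + b₁ * g X + b₂) :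
    ∀ r : ℝ, 1 ≤ r →
      ∃! b₂ : ℝ, b₂ ∈ Set.Ico (0:ℝ) (2*μ - 2*b₁*μ^3) ∧
        (∫ X in (-2*μ)..(-μ), deriv g X / (X + b₁ * g X + b₂)) /
          (∫ X in (2*μ)..μ, deriv g X / (X + b₁ * g X + b₂)) = r := by
  intro r hr
  open DurationRatio in
  -- basic facts
  have hμ2 : (0:ℝ) < μ^2 := by positivity
  have hb₁μ : b₁ * μ^2 < 1 := by
    rw [lt_div_iff₀ hμ2] at hb₁1; linarith
  have hs : 0 < 2*μ - 2*b₁*μ^3 := by nlinarith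
  set s : ℝ := 2*μ - 2*b₁*μ^3 with hsdef
  -- translate hypotheses
  have hn : ∀ b₂ ∈ Set.Ico (0:ℝ) s, ∀ X ∈ Set.Icc (-2*μ) (-μ),
      DurationRatio.hden μ b₁ X + b₂ < 0 := by
    intro b₂ hb X hX
    have := hneg b₂ hb X hX
    rwa [hg X] at this
  have hp : ∀ b₂ ∈ Set.Ico (0:ℝ) s, ∀ X ∈ Set.Icc μ (2*μ),
      0 < DurationRatio.hden μ b₁ X + b₂ := by
    intro b₂ hb X hX
    have := hpos b₂ hb X hX
    rwa [hg X] at this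
  have h0mem : (0:ℝ) ∈ Set.Ico (0:ℝ) s := ⟨le_rfl, hs⟩
  -- derivative of g
  have hgeq : g = fun X => -X^3 + 3*μ^2*X := funext hg
  have hderiv : ∀ X : ℝ, deriv g X = -3*X^2 + 3*μ^2 := by
    intro X
    rw [hgeq]
    have h1 : HasDerivAt (fun X : ℝ => -X^3 + 3*μ^2*X) (-3*X^2 + 3*μ^2) X := by
      have := ((hasDerivAt_pow 3 X).neg).add ((hasDerivAt_id X).const_mul (3*μ^2))
      convert this using 1
      all_goals first | rfl | (push_cast; ring)
    exact h1.deriv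
  -- rewrite integrals as Tm / Tp
  have hTm' : ∀ b₂ : ℝ, (∫ X in (-2*μ)..(-μ), deriv g X / (X + b₁ * g X + b₂))
      = DurationRatio.Tm μ b₁ b₂ := by
    intro b₂
    refine intervalIntegral.integral_congr (fun X _ => ?_)
    rw [hderiv X, hg X]
    rfl
  have hTp' : ∀ b₂ : ℝ, (∫ X in (2*μ)..μ, deriv g X / (X + b₁ * g X + b₂))
      = DurationRatio.Tp μ b₁ b₂ := by
    intro b₂
    refine intervalIntegral.integral_congr (fun X _ => ?_)
    rw [hderiv X, hg X]
    rfl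
  -- positivity
  have hTp0 : 0 < DurationRatio.Tp μ b₁ 0 := DurationRatio.Tp_pos hμ (hp 0 h0mem)
  -- strict monotonicity of the ratio on Ico 0 s
  have hRmono : ∀ a ∈ Set.Ico (0:ℝ) s, ∀ b ∈ Set.Ico (0:ℝ) s, a < b →
      DurationRatio.Tm μ b₁ a / DurationRatio.Tp μ b₁ a
        < DurationRatio.Tm μ b₁ b / DurationRatio.Tp μ b₁ b := by
    intro a ha b hb hab
    have hTma : 0 < DurationRatio.Tm μ b₁ a := DurationRatio.Tm_pos hμ (hn a ha)
    have hTpa : 0 < DurationRatio.Tp μ b₁ a := DurationRatio.Tp_pos hμ (hp a ha)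
    have hTpb : 0 < DurationRatio.Tp μ b₁ b := DurationRatio.Tp_pos hμ (hp b hb)
    have h1 : DurationRatio.Tm μ b₁ a < DurationRatio.Tm μ b₁ b :=
      DurationRatio.Tm_strictMono hμ (hn a ha) (hn b hb) hab
    have h2 : DurationRatio.Tp μ b₁ b < DurationRatio.Tp μ b₁ a :=
      DurationRatio.Tp_strictAnti hμ (hp a ha) (hp b hb) hab
    rw [div_lt_div_iff₀ hTpa hTpb]
    nlinarith
  -- get a point where the ratio exceeds r
  obtain ⟨c, hcmem, hc⟩ := DurationRatio.Tm_large hμ hb₁0 hb₁μ.le hs hn (r * DurationRatio.Tp μ b₁ 0)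
  have hc0 : 0 ≤ c := hcmem.1
  have hTpc : 0 < DurationRatio.Tp μ b₁ c := DurationRatio.Tp_pos hμ (hp c hcmem)
  have hTpc0 : DurationRatio.Tp μ b₁ c ≤ DurationRatio.Tp μ b₁ 0 := by
    rcases eq_or_lt_of_le hc0 with h | h
    · rw [← h]
    · exact (DurationRatio.Tp_strictAnti hμ (hp 0 h0mem) (hp c hcmem) h).le
  have hrc : r < DurationRatio.Tm μ b₁ c / DurationRatio.Tp μ b₁ c := by
    rw [lt_div_iff₀ hTpc]
    have : r * DurationRatio.Tp μ b₁ c ≤ r * DurationRatio.Tp μ b₁ 0 :=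
      mul_le_mul_of_nonneg_left hTpc0 (by linarith)
    linarith
  -- value at 0 is 1
  have hR0 : DurationRatio.Tm μ b₁ 0 / DurationRatio.Tp μ b₁ 0 = 1 := by
    rw [DurationRatio.Tm_zero_eq_Tp_zero]
    exact div_self hTp0.ne'
  -- continuity of the ratio on Icc 0 c
  have hcontR : ContinuousOn
      (fun b₂ => DurationRatio.Tm μ b₁ b₂ / DurationRatio.Tp μ b₁ b₂) (Set.Icc 0 c) := by
    apply ContinuousOn.div (DurationRatio.contOn_Tm hμ (hn c hcmem))
      (DurationRatio.contOn_Tp hμ (by simpa using hp 0 h0mem))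
    intro x hx
    have hxmem : x ∈ Set.Ico (0:ℝ) s := ⟨hx.1, lt_of_le_of_lt hx.2 hcmem.2⟩
    exact (DurationRatio.Tp_pos hμ (hp x hxmem)).ne'
  -- intermediate value theorem
  have hivt := intermediate_value_Icc hc0 hcontR
  have hrmem : r ∈ Set.Icc (DurationRatio.Tm μ b₁ 0 / DurationRatio.Tp μ b₁ 0)
      (DurationRatio.Tm μ b₁ c / DurationRatio.Tp μ b₁ c) := by
    rw [hR0]; exact ⟨hr, hrc.le⟩
  obtain ⟨x, hx, hRx⟩ := hivt hrmem
  replace hRx : DurationRatio.Tm μ b₁ x / DurationRatio.Tp μ b₁ x = r := hRx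
  have hxmem : x ∈ Set.Ico (0:ℝ) s := ⟨hx.1, lt_of_le_of_lt hx.2 hcmem.2⟩
  refine ⟨x, ⟨hxmem, ?_⟩, ?_⟩
  · rw [hTm', hTp']
    exact hRx
  · intro y hy
    obtain ⟨hymem, hyeq⟩ := hy
    rw [hTm', hTp'] at hyeq
    by_contra hne
    rcases lt_or_gt_of_ne hne with h | h
    · have := hRmono y hymem x hxmem h
      rw [hyeq, hRx] at this
      exact lt_irrefl r this
    · have := hRmono x hxmem y hymem h
      rw [hyeq, hRx] at this
      exact lt_irrefl r this
end
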